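/- Let l ≥ 3. The even endomorphisms H_{ξ₁η₂} = L_{η₂}∘∂_{η₁} − L_{ξ₁}∘∂_{ξ₂} and H_{ξ₂η₃} = L_{η₃}∘∂_{η₂} − L_{ξ₂}∘∂_{ξ₃} of Λ each commute with the odd endomorphism H_{η₁η₂η₃}: [H_{ξ₁η₂}, H_{η₁η₂η₃}] = 0 and [H_{ξ₂η₃}, H_{η₁η₂η₃}] = 0 (commutators). These realize the relations {ξ₁η₂, η₁η₂η₃} = 0 and {ξ₂η₃, η₁η₂η₃} = 0 between the Chevalley-type generators of n₊ of o(2l) and the extra generator Y = H_{η₁η₂η₃} of h(0|2l) stated in the paper (§2.1.2). -/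

import Mathlib

/-- The exterior algebra Λ of ℂ^{2l}, with generators indexed by
`Fin l ⊕ Fin l` (left = ξ's, right = η's). -/
noncomputable abbrev Lam (l : ℕ) := ExteriorAlgebra ℂ ((Fin l ⊕ Fin l) → ℂ)

/-- The generator of Λ corresponding to index `a` (image of the standard basis). -/
noncomputable def gen (l : ℕ) (a : Fin l ⊕ Fin l) : Lam l :=
  ExteriorAlgebra.ι ℂ (Pi.single a 1)

/-- The generator ξᵢ. -/
noncomputable def xiv (l : ℕ) (i : Fin l) : Lam l := gen l (Sum.inl i)

/-- The generator ηᵢ. -/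
noncomputable def etav (l : ℕ) (i : Fin l) : Lam l := gen l (Sum.inr i)

/-- L_g : left exterior multiplication by g. -/
noncomputable def Lmul (l : ℕ) (g : Lam l) : Module.End ℂ (Lam l) :=
  LinearMap.mulLeft ℂ g

/-- `IsContraction l a D` says that `D` is the contraction ∂_ζ with the dual of
the generator ζ indexed by `a`: it kills 1, sends the generator indexed by `b`
to δ_{ab}·1, and satisfies ∂(xy) = ∂(x)y + (−1)ᵖ x ∂(y) whenever x is a product
of p generators. -/
def IsContraction (l : ℕ) (a : Fin l ⊕ Fin l) (D : Module.End ℂ (Lam l)) : Prop :=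
  D 1 = 0 ∧
  (∀ b, D (gen l b) = if a = b then 1 else 0) ∧
  (∀ (p : ℕ) (g : Fin p → (Fin l ⊕ Fin l)) (y : Lam l),
    D ((List.ofFn fun k => gen l (g k)).prod * y) =
      D ((List.ofFn fun k => gen l (g k)).prod) * y +
        ((-1 : ℂ) ^ p) • ((List.ofFn fun k => gen l (g k)).prod * D y))

/-- The Hamiltonian vector field H_f = Σᵢ (L_{∂_{ξᵢ}f} ∘ ∂_{ηᵢ} + L_{∂_{ηᵢ}f} ∘ ∂_{ξᵢ}),
realized as an endomorphism of Λ; `pd a` is the contraction operator ∂ with the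
generator indexed by `a`. -/
noncomputable def Ham (l : ℕ) (pd : (Fin l ⊕ Fin l) → Module.End ℂ (Lam l))
    (f : Lam l) : Module.End ℂ (Lam l) :=
  ∑ i : Fin l,
    (Lmul l (pd (Sum.inl i) f) ∘ₗ pd (Sum.inr i) +
     Lmul l (pd (Sum.inr i) f) ∘ₗ pd (Sum.inl i))

-- auxiliary lemmas

lemma contraction_step {l : ℕ} {a b : Fin l ⊕ Fin l} {D : Module.End ℂ (Lam l)}
    (hD : IsContraction l a D) (y : Lam l) :
    D (gen l b * y) = (if a = b then y else 0) - gen l b * D y := by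
  have h := hD.2.2 1 (fun _ => b) y
  simp only [List.ofFn_succ, List.ofFn_zero, List.prod_cons, List.prod_nil, mul_one,
    pow_one, neg_smul, one_smul] at h
  rw [h, hD.2.1, ite_mul, one_mul, zero_mul, ← sub_eq_add_neg]

lemma contraction_ι_step {l : ℕ} {a : Fin l ⊕ Fin l} {D : Module.End ℂ (Lam l)}
    (hD : IsContraction l a D) (m : (Fin l ⊕ Fin l) → ℂ) (y : Lam l) :
    D (ExteriorAlgebra.ι ℂ m * y) = m a • y - ExteriorAlgebra.ι ℂ m * D y := by
  have key : (D ∘ₗ (LinearMap.mulRight ℂ y) ∘ₗ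
        (ExteriorAlgebra.ι ℂ : ((Fin l ⊕ Fin l) → ℂ) →ₗ[ℂ] Lam l))
      = ((LinearMap.proj a).smulRight y) -
        (LinearMap.mulRight ℂ (D y)) ∘ₗ (ExteriorAlgebra.ι ℂ) := by
    apply Module.Basis.ext (Pi.basisFun ℂ (Fin l ⊕ Fin l))
    intro b
    simp only [Pi.basisFun_apply, LinearMap.comp_apply, LinearMap.mulRight_apply,
      LinearMap.sub_apply, LinearMap.smulRight_apply, LinearMap.proj_apply]
    rw [show ExteriorAlgebra.ι ℂ (Pi.single b 1) = gen l b from rfl, contraction_step hD]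
    rw [Pi.single_apply]
    split_ifs with h
    · subst h; simp
    · simp [Ne.symm h]
  have := LinearMap.congr_fun key m
  simpa using this

lemma end_eq_zero_of {l : ℕ} (F : Module.End ℂ (Lam l)) (h1 : F 1 = 0)
    (hstep : ∀ m y, F (ExteriorAlgebra.ι ℂ m * y) = ExteriorAlgebra.ι ℂ m * F y) :
    F = 0 := by
  have key : ∀ (n : ℕ) (v : Fin n → ((Fin l ⊕ Fin l) → ℂ)),
      F (ExteriorAlgebra.ιMulti ℂ n v) = 0 := by
    intro n
    induction n with
    | zero => intro v; simpa using h1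
    | succ n ih =>
      intro v
      rw [ExteriorAlgebra.ιMulti_succ_apply, hstep, ih, mul_zero]
  ext n v
  simpa using key n v

lemma contraction_anticomm {l : ℕ} {a b : Fin l ⊕ Fin l}
    {Da Db : Module.End ℂ (Lam l)} (ha : IsContraction l a Da) (hb : IsContraction l b Db) :
    Da * Db + Db * Da = 0 := by
  apply end_eq_zero_of
  · simp only [LinearMap.add_apply, Module.End.mul_apply, ha.1, hb.1, map_zero, add_zero]
  · intro m y
    simp only [LinearMap.add_apply, Module.End.mul_apply]
    rw [contraction_ι_step hb, map_sub, map_smul, contraction_ι_step ha,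
        contraction_ι_step ha, map_sub, map_smul, contraction_ι_step hb, mul_add]
    abel

lemma contraction_sq {l : ℕ} {a : Fin l ⊕ Fin l} {D : Module.End ℂ (Lam l)}
    (hD : IsContraction l a D) : D * D = 0 := by
  have h := contraction_anticomm hD hD
  have h2 : (2 : ℂ) • (D * D) = 0 := by rw [two_smul]; exact h
  simpa using (smul_eq_zero.mp h2).resolve_left (by norm_num)

lemma contraction_mulLeft_tail {l : ℕ} {a : Fin l ⊕ Fin l} {D : Module.End ℂ (Lam l)}
    (hD : IsContraction l a D) (b : Fin l ⊕ Fin l) (x : Module.End ℂ (Lam l)) :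
    D * (Lmul l (gen l b) * x) =
      (if a = b then x else 0) - Lmul l (gen l b) * (D * x) := by
  refine LinearMap.ext fun z => ?_
  simp only [Module.End.mul_apply, LinearMap.sub_apply, Lmul, LinearMap.mulLeft_apply]
  rw [contraction_step hD]
  congr 1
  split_ifs <;> simp

lemma mulLeft_gen_swap {l : ℕ} (a b : Fin l ⊕ Fin l) :
    Lmul l (gen l a) * Lmul l (gen l b) = -(Lmul l (gen l b) * Lmul l (gen l a)) := by
  refine LinearMap.ext fun x => ?_
  simp only [Module.End.mul_apply, LinearMap.neg_apply, Lmul, LinearMap.mulLeft_apply]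
  rw [← mul_assoc, ← mul_assoc, ← neg_mul]
  congr 1
  have h := ExteriorAlgebra.ι_add_mul_swap (R := ℂ) (Pi.single a (1:ℂ) : (Fin l ⊕ Fin l) → ℂ) (Pi.single b 1)
  have : gen l a * gen l b + gen l b * gen l a = 0 := h
  exact eq_neg_of_add_eq_zero_left this

lemma mulLeft_gen_sq {l : ℕ} (a : Fin l ⊕ Fin l) :
    Lmul l (gen l a) * Lmul l (gen l a) = 0 := by
  refine LinearMap.ext fun x => ?_
  simp only [Module.End.mul_apply, Lmul, LinearMap.mulLeft_apply, LinearMap.zero_apply]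
  rw [← mul_assoc, show gen l a * gen l a = 0 from ExteriorAlgebra.ι_sq_zero _, zero_mul]

lemma Lmul_neg {l : ℕ} (g : Lam l) : Lmul l (-g) = -(Lmul l g) := by
  refine LinearMap.ext fun x => ?_; simp [Lmul, neg_mul]

lemma Lmul_zero {l : ℕ} : Lmul l 0 = 0 := LinearMap.mulLeft_zero_eq_zero ℂ (Lam l)

lemma Lmul_mul {l : ℕ} (g h : Lam l) : Lmul l (g * h) = Lmul l g * Lmul l h :=
  LinearMap.mulLeft_mul ℂ (Lam l) g h

lemma Ham_xi_eta {l : ℕ} {pd : (Fin l ⊕ Fin l) → Module.End ℂ (Lam l)}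
    (hpd : ∀ a, IsContraction l a (pd a)) (p q : Fin l) (hpq : p ≠ q) :
    Ham l pd (xiv l p * etav l q) =
      Lmul l (etav l q) * pd (Sum.inr p) - Lmul l (xiv l p) * pd (Sum.inl q) := by
  have h1 : ∀ i : Fin l, pd (Sum.inl i) (xiv l p * etav l q)
      = if i = p then etav l q else 0 := by
    intro i
    rw [xiv, etav, contraction_step (hpd _), (hpd _).2.1]
    simp [Sum.inl.injEq]
  have h2 : ∀ i : Fin l, pd (Sum.inr i) (xiv l p * etav l q)
      = if i = q then -(xiv l p) else 0 := by
    intro i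
    rw [xiv, etav, contraction_step (hpd _), (hpd _).2.1]
    by_cases h : i = q <;> simp [h, Sum.inr.injEq]
  rw [Ham]
  calc (∑ i : Fin l, (Lmul l (pd (Sum.inl i) (xiv l p * etav l q)) ∘ₗ pd (Sum.inr i) +
          Lmul l (pd (Sum.inr i) (xiv l p * etav l q)) ∘ₗ pd (Sum.inl i)))
      = ∑ i : Fin l, ((if i = p then Lmul l (etav l q) * pd (Sum.inr i) else 0)
          + (if i = q then -(Lmul l (xiv l p) * pd (Sum.inl i)) else 0)) := by
        refine Finset.sum_congr rfl fun i _ => ?_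
        rw [h1 i, h2 i]
        rcases eq_or_ne i p with rfl|hip
        · simp [hpq, Lmul_zero, Module.End.mul_eq_comp]
        · rcases eq_or_ne i q with rfl|hiq
          · simp [hip, Lmul_zero, Lmul_neg, Module.End.mul_eq_comp, LinearMap.neg_comp]
          · simp [hip, hiq, Lmul_zero]
    _ = _ := by
        rw [Finset.sum_add_distrib, Finset.sum_ite_eq' Finset.univ,
          Finset.sum_ite_eq' Finset.univ]
        simp [sub_eq_add_neg]

lemma Ham_eta3 {l : ℕ} {pd : (Fin l ⊕ Fin l) → Module.End ℂ (Lam l)}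
    (hpd : ∀ a, IsContraction l a (pd a)) (p q r : Fin l)
    (hpq : p ≠ q) (hpr : p ≠ r) (hqr : q ≠ r) :
    Ham l pd (etav l p * etav l q * etav l r) =
      Lmul l (etav l q) * Lmul l (etav l r) * pd (Sum.inl p)
      - Lmul l (etav l p) * Lmul l (etav l r) * pd (Sum.inl q)
      + Lmul l (etav l p) * Lmul l (etav l q) * pd (Sum.inl r) := by
  have h1 : ∀ i : Fin l, pd (Sum.inl i) (etav l p * etav l q * etav l r) = 0 := by
    intro i
    rw [mul_assoc, etav, etav, etav, contraction_step (hpd _), contraction_step (hpd _),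
      (hpd _).2.1]
    simp
  have h2 : ∀ i : Fin l, pd (Sum.inr i) (etav l p * etav l q * etav l r)
      = if i = p then etav l q * etav l r else
        if i = q then -(etav l p * etav l r) else
        if i = r then etav l p * etav l q else 0 := by
    intro i
    rw [mul_assoc, etav, etav, etav, contraction_step (hpd _), contraction_step (hpd _),
      (hpd _).2.1]
    rcases eq_or_ne i p with rfl|hip
    · simp [hpq, hpr, Sum.inr.injEq]
    · rcases eq_or_ne i q with rfl|hiq
      · simp [hip, hqr, Sum.inr.injEq]
      · rcases eq_or_ne i r with rfl|hir
        · simp [hip, hiq, Sum.inr.injEq]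
        · simp [hip, hiq, hir, Sum.inr.injEq]
  rw [Ham]
  calc (∑ i : Fin l, (Lmul l (pd (Sum.inl i) (etav l p * etav l q * etav l r)) ∘ₗ pd (Sum.inr i) +
          Lmul l (pd (Sum.inr i) (etav l p * etav l q * etav l r)) ∘ₗ pd (Sum.inl i)))
      = ∑ i : Fin l,
          ((if i = p then Lmul l (etav l q) * Lmul l (etav l r) * pd (Sum.inl i) else 0)
          + ((if i = q then -(Lmul l (etav l p) * Lmul l (etav l r) * pd (Sum.inl i)) else 0)
          + (if i = r then Lmul l (etav l p) * Lmul l (etav l q) * pd (Sum.inl i) else 0))) := by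
        refine Finset.sum_congr rfl fun i _ => ?_
        rw [h1 i, h2 i]
        rcases eq_or_ne i p with rfl|hip
        · simp [hpq, hpr, Lmul_zero, Lmul_mul, Module.End.mul_eq_comp, LinearMap.comp_assoc]
        · rcases eq_or_ne i q with rfl|hiq
          · simp [hip, hqr, Lmul_zero, Lmul_neg, Lmul_mul, Module.End.mul_eq_comp,
              LinearMap.neg_comp, LinearMap.comp_assoc]
          · rcases eq_or_ne i r with rfl|hir
            · simp [hip, hiq, Lmul_zero, Lmul_mul, Module.End.mul_eq_comp, LinearMap.comp_assoc]
            · simp [hip, hiq, hir, Lmul_zero]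
    _ = _ := by
        rw [Finset.sum_add_distrib, Finset.sum_add_distrib, Finset.sum_ite_eq' Finset.univ,
          Finset.sum_ite_eq' Finset.univ, Finset.sum_ite_eq' Finset.univ]
        simp [sub_eq_add_neg, add_assoc]

/-- A weight used only to orient normal-ordering rewrites. -/
def ordIdx {l : ℕ} : Fin l ⊕ Fin l → ℕ := Sum.elim (fun i => i.val) (fun i => i.val + 3)

@[simp] lemma ordIdx_inl {l : ℕ} (i : Fin l) : ordIdx (Sum.inl i) = i.val := rfl
@[simp] lemma ordIdx_inr {l : ℕ} (i : Fin l) : ordIdx (Sum.inr i) = i.val + 3 := rfl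

@[simp] lemma fin_val_mk {l n : ℕ} (h : n < l) : ((⟨n, h⟩ : Fin l) : ℕ) = n := rfl

lemma eswap_t {l : ℕ} (a b : Fin l ⊕ Fin l) (x : Module.End ℂ (Lam l))
    (h : ordIdx b < ordIdx a) :
    Lmul l (gen l a) * (Lmul l (gen l b) * x)
      = -(Lmul l (gen l b) * (Lmul l (gen l a) * x)) := by
  rw [← mul_assoc, mulLeft_gen_swap]
  exact (neg_mul _ x).trans (congrArg _ (mul_assoc _ _ x))

lemma eswap_b {l : ℕ} (a b : Fin l ⊕ Fin l) (h : ordIdx b < ordIdx a) :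
    Lmul l (gen l a) * Lmul l (gen l b) = -(Lmul l (gen l b) * Lmul l (gen l a)) :=
  mulLeft_gen_swap a b

lemma esq_t {l : ℕ} (a : Fin l ⊕ Fin l) (x : Module.End ℂ (Lam l)) :
    Lmul l (gen l a) * (Lmul l (gen l a) * x) = 0 := by
  rw [← mul_assoc, mulLeft_gen_sq, zero_mul]

lemma cswap_t {l : ℕ} {a b : Fin l ⊕ Fin l} {Da Db : Module.End ℂ (Lam l)}
    (ha : IsContraction l a Da) (hb : IsContraction l b Db) (x : Module.End ℂ (Lam l))
    (h : ordIdx b < ordIdx a) :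
    Da * (Db * x) = -(Db * (Da * x)) := by
  rw [← mul_assoc, eq_neg_of_add_eq_zero_left (contraction_anticomm ha hb)]
  exact (neg_mul _ x).trans (congrArg _ (mul_assoc _ _ x))

lemma cswap_b {l : ℕ} {a b : Fin l ⊕ Fin l} {Da Db : Module.End ℂ (Lam l)}
    (ha : IsContraction l a Da) (hb : IsContraction l b Db)
    (h : ordIdx b < ordIdx a) :
    Da * Db = -(Db * Da) :=
  eq_neg_of_add_eq_zero_left (contraction_anticomm ha hb)

lemma csq_t {l : ℕ} {a : Fin l ⊕ Fin l} {D : Module.End ℂ (Lam l)}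
    (hD : IsContraction l a D) (x : Module.End ℂ (Lam l)) : D * (D * x) = 0 := by
  rw [← mul_assoc, contraction_sq hD, zero_mul]

lemma ce_t_ne {l : ℕ} {a : Fin l ⊕ Fin l} {D : Module.End ℂ (Lam l)}
    (hD : IsContraction l a D) {b : Fin l ⊕ Fin l} (h : a ≠ b) (x : Module.End ℂ (Lam l)) :
    D * (Lmul l (gen l b) * x) = -(Lmul l (gen l b) * (D * x)) := by
  rw [contraction_mulLeft_tail hD, if_neg h, zero_sub]

lemma ce_t_eq {l : ℕ} {a : Fin l ⊕ Fin l} {D : Module.End ℂ (Lam l)}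
    (hD : IsContraction l a D) (x : Module.End ℂ (Lam l)) :
    D * (Lmul l (gen l a) * x) = x - Lmul l (gen l a) * (D * x) := by
  rw [contraction_mulLeft_tail hD, if_pos rfl]

lemma ce_b_ne {l : ℕ} {a : Fin l ⊕ Fin l} {D : Module.End ℂ (Lam l)}
    (hD : IsContraction l a D) {b : Fin l ⊕ Fin l} (h : a ≠ b) :
    D * Lmul l (gen l b) = -(Lmul l (gen l b) * D) := by
  have := contraction_mulLeft_tail hD b 1
  simpa [if_neg h] using this

lemma ce_b_eq {l : ℕ} {a : Fin l ⊕ Fin l} {D : Module.End ℂ (Lam l)}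
    (hD : IsContraction l a D) :
    D * Lmul l (gen l a) = 1 - Lmul l (gen l a) * D := by
  have := contraction_mulLeft_tail hD a 1
  simpa using this

lemma End_mul_neg {l : ℕ} (x y : Module.End ℂ (Lam l)) : x * -y = -(x * y) := mul_neg x y

lemma End_neg_mul {l : ℕ} (x y : Module.End ℂ (Lam l)) : -x * y = -(x * y) := neg_mul x y

/-- for l ≥ 3, the even operators H_{ξ₁η₂} = L_{η₂}∘∂_{η₁} − L_{ξ₁}∘∂_{ξ₂}
and H_{ξ₂η₃} = L_{η₃}∘∂_{η₂} − L_{ξ₂}∘∂_{ξ₃} each commute with the odd operator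
H_{η₁η₂η₃}, realizing the relations {ξ₁η₂, η₁η₂η₃} = 0 and {ξ₂η₃, η₁η₂η₃} = 0
of §2.1.2. (Indices 0-based.) -/
theorem ham_Chevalley_Y_relations12 (l : ℕ) (hl : 3 ≤ l)
    (pd : (Fin l ⊕ Fin l) → Module.End ℂ (Lam l))
    (hpd : ∀ a, IsContraction l a (pd a))
    (D A B : Module.End ℂ (Lam l))
    (hD : D = Ham l pd (etav l ⟨0, by omega⟩ * etav l ⟨1, by omega⟩ * etav l ⟨2, by omega⟩))
    (hA : A = Ham l pd (xiv l ⟨0, by omega⟩ * etav l ⟨1, by omega⟩))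
    (hB : B = Ham l pd (xiv l ⟨1, by omega⟩ * etav l ⟨2, by omega⟩)) :
    A = Lmul l (etav l ⟨1, by omega⟩) ∘ₗ pd (Sum.inr ⟨0, by omega⟩)
        - Lmul l (xiv l ⟨0, by omega⟩) ∘ₗ pd (Sum.inl ⟨1, by omega⟩) ∧
    B = Lmul l (etav l ⟨2, by omega⟩) ∘ₗ pd (Sum.inr ⟨1, by omega⟩)
        - Lmul l (xiv l ⟨1, by omega⟩) ∘ₗ pd (Sum.inl ⟨2, by omega⟩) ∧
    A ∘ₗ D - D ∘ₗ A = 0 ∧ B ∘ₗ D - D ∘ₗ B = 0 := by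
  have hA2 := hA.trans (Ham_xi_eta hpd ⟨0, by omega⟩ ⟨1, by omega⟩ (by simp))
  have hB2 := hB.trans (Ham_xi_eta hpd ⟨1, by omega⟩ ⟨2, by omega⟩ (by simp))
  have hD2 := hD.trans
    (Ham_eta3 hpd ⟨0, by omega⟩ ⟨1, by omega⟩ ⟨2, by omega⟩ (by simp) (by simp) (by simp))
  have hcet : ∀ (a b : Fin l ⊕ Fin l) (x : Module.End ℂ (Lam l)), a ≠ b →
      pd a * (Lmul l (gen l b) * x) = -(Lmul l (gen l b) * (pd a * x)) :=
    fun a b x h => ce_t_ne (hpd a) h x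
  have hceteq : ∀ (a : Fin l ⊕ Fin l) (x : Module.End ℂ (Lam l)),
      pd a * (Lmul l (gen l a) * x) = x - Lmul l (gen l a) * (pd a * x) :=
    fun a x => ce_t_eq (hpd a) x
  have hceb : ∀ (a b : Fin l ⊕ Fin l), a ≠ b →
      pd a * Lmul l (gen l b) = -(Lmul l (gen l b) * pd a) :=
    fun a b h => ce_b_ne (hpd a) h
  have hcebeq : ∀ (a : Fin l ⊕ Fin l),
      pd a * Lmul l (gen l a) = 1 - Lmul l (gen l a) * pd a :=
    fun a => ce_b_eq (hpd a)
  have hcct : ∀ (a b : Fin l ⊕ Fin l) (x : Module.End ℂ (Lam l)), ordIdx b < ordIdx a →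
      pd a * (pd b * x) = -(pd b * (pd a * x)) :=
    fun a b x h => cswap_t (hpd a) (hpd b) x h
  have hccb : ∀ (a b : Fin l ⊕ Fin l), ordIdx b < ordIdx a →
      pd a * pd b = -(pd b * pd a) :=
    fun a b h => cswap_b (hpd a) (hpd b) h
  have hcsq : ∀ (a : Fin l ⊕ Fin l) (x : Module.End ℂ (Lam l)), pd a * (pd a * x) = 0 :=
    fun a x => csq_t (hpd a) x
  have hcsqb : ∀ (a : Fin l ⊕ Fin l), pd a * pd a = 0 := fun a => contraction_sq (hpd a)
  refine ⟨hA2, hB2, ?_, ?_⟩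
  · rw [← Module.End.mul_eq_comp, ← Module.End.mul_eq_comp, hA2, hD2]
    simp only [xiv, etav] at *
    simp (disch := (simp only [ordIdx_inl, ordIdx_inr, fin_val_mk, ne_eq, Sum.inl.injEq,
        Sum.inr.injEq, Fin.mk.injEq, reduceCtorEq, not_false_eq_true] <;> try omega))
      [mul_add, add_mul, mul_sub, sub_mul, mul_assoc, hcet, hceteq, hceb, hcebeq,
      hcct, hccb, hcsq, hcsqb, eswap_t, eswap_b, esq_t, mulLeft_gen_sq, End_mul_neg, End_neg_mul]
    abel
  · rw [← Module.End.mul_eq_comp, ← Module.End.mul_eq_comp, hB2, hD2]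
    simp only [xiv, etav] at *
    simp (disch := (simp only [ordIdx_inl, ordIdx_inr, fin_val_mk, ne_eq, Sum.inl.injEq,
        Sum.inr.injEq, Fin.mk.injEq, reduceCtorEq, not_false_eq_true] <;> try omega))
      [mul_add, add_mul, mul_sub, sub_mul, mul_assoc, hcet, hceteq, hceb, hcebeq,
      hcct, hccb, hcsq, hcsqb, eswap_t, eswap_b, esq_t, mulLeft_gen_sq, End_mul_neg, End_neg_mul]
    abel
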